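/- arXiv:2507.05738 — 2 statements merged into one kernel-verified Lean document; each statement's English description precedes it below -/
import Mathlib

section
/- In any pure-strategy Nash equilibrium of the second-price auction (k = 2), the seller's revenue lies in the interval [0, v_1]. -/
open Classical

/-- The k-th highest bid (k counted from 1). -/
noncomputable def kthHighest {n : ℕ} (b : Fin n → ℝ) (k : ℕ) : ℝ :=
  ((List.ofFn b).mergeSort (fun x y => decide (y ≤ x))).getD (k - 1) 0

/-- Agent `i` wins: her bid is highest, with ties broken toward the
agent with the highest valuation, i.e. (for strictly decreasing valuations)
the lowest index among the maximal bidders. -/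
def wins {n : ℕ} (b : Fin n → ℝ) (i : Fin n) : Prop :=
  (∀ j, b j ≤ b i) ∧ ∀ j, b j = b i → i ≤ j

/-- The price paid by the winner in the k-price auction (2 ≤ k ≤ n), or in the
first-price auction (the case k = n+1), where the winner pays the highest bid. -/
noncomputable def price {n : ℕ} (k : ℕ) (b : Fin n → ℝ) : ℝ :=
  if k = n + 1 then kthHighest b 1 else kthHighest b k

/-- The winner gets her valuation minus the price; losers get 0. -/
noncomputable def utility {n : ℕ} (v : Fin n → ℝ) (k : ℕ) (b : Fin n → ℝ)
    (i : Fin n) : ℝ :=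
  if wins b i then v i - price k b else 0

/-- Pure-strategy Nash equilibrium with nonnegative bids: no agent can strictly
improve her utility by a unilateral deviation to another nonnegative bid. -/
def NashEq {n : ℕ} (v : Fin n → ℝ) (k : ℕ) (b : Fin n → ℝ) : Prop :=
  (∀ i, 0 ≤ b i) ∧
  ∀ i : Fin n, ∀ b' : ℝ, 0 ≤ b' →
    utility v k (Function.update b i b') i ≤ utility v k b i

/-- One-based valuation indexing, with the convention `v_{n+1} = 0`. -/
noncomputable def vIdx {n : ℕ} (v : Fin n → ℝ) (j : ℕ) : ℝ :=
  if h : 1 ≤ j ∧ j ≤ n then v ⟨j - 1, by omega⟩ else 0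

lemma kthHighest_cases {n : ℕ} (b : Fin n → ℝ) (k : ℕ) :
    kthHighest b k = 0 ∨ ∃ j, kthHighest b k = b j := by
  unfold kthHighest
  generalize hl : (List.ofFn b).mergeSort (fun x y => decide (y ≤ x)) = l
  by_cases h : k - 1 < l.length
  · right
    rw [List.getD_eq_getElem l 0 h]
    set x := l[k-1] with hx
    have hmem : x ∈ l := List.getElem_mem h
    rw [← hl, List.mem_mergeSort, List.mem_ofFn] at hmem
    obtain ⟨j, hj⟩ := hmem
    exact ⟨j, hj.symm⟩
  · left
    exact List.getD_eq_default l 0 (by omega)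

lemma exists_winner {n : ℕ} (hn : 1 ≤ n) (b : Fin n → ℝ) : ∃ i, wins b i := by
  have hne : Nonempty (Fin n) := ⟨⟨0, by omega⟩⟩
  obtain ⟨m, hm⟩ := Finite.exists_max b
  set s : Finset (Fin n) := Finset.univ.filter (fun j => b j = b m) with hs
  have hns : s.Nonempty := ⟨m, by simp [hs]⟩
  refine ⟨s.min' hns, ?_, ?_⟩
  · have : b (s.min' hns) = b m := by
      have := s.min'_mem hns
      simp [hs] at this; exact this
    intro j; rw [this]; exact hm j
  · intro j hj
    have hmin : b (s.min' hns) = b m := by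
      have := s.min'_mem hns
      simp [hs] at this; exact this
    exact s.min'_le j (by rw [hs, Finset.mem_filter]; exact ⟨Finset.mem_univ _, hj.trans hmin⟩)
theorem stmt1 {n : ℕ} (hn : 2 ≤ n) (v : Fin n → ℝ) (hv : StrictAnti v) (hvpos : ∀ i, 0 < v i)
    (b : Fin n → ℝ) (hb : NashEq v 2 b) :
    0 ≤ price 2 b ∧ price 2 b ≤ v ⟨0, by omega⟩ := by
  obtain ⟨hbnn, hnash⟩ := hb
  have hprice : price 2 b = kthHighest b 2 := by
    unfold price; rw [if_neg (by omega)]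
  have h0 : 0 ≤ price 2 b := by
    rw [hprice]
    rcases kthHighest_cases b 2 with h | ⟨j, hj⟩
    · rw [h]
    · rw [hj]; exact hbnn j
  refine ⟨h0, ?_⟩
  obtain ⟨i, hwin⟩ := exists_winner (by omega) b
  -- deviation to 0
  have hdev := hnash i 0 le_rfl
  set b' := Function.update b i 0 with hb'
  have hdevnn : 0 ≤ utility v 2 b' i := by
    unfold utility
    split_ifs with hw
    · -- all updated bids are 0
      have hall : ∀ j, b' j = 0 := by
        intro j
        have h1 : b' j ≤ b' i := hw.1 j
        have h2 : b' i = 0 := Function.update_self i 0 b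
        have h3 : 0 ≤ b' j := by
          by_cases hji : j = i
          · rw [hji, h2]
          · rw [hb', Function.update_of_ne hji]; exact hbnn j
        linarith [h2 ▸ h1]
      have hp : price 2 b' = 0 := by
        have hprice' : price 2 b' = kthHighest b' 2 := by
          unfold price; rw [if_neg (by omega)]
        rw [hprice']
        rcases kthHighest_cases b' 2 with h | ⟨j, hj⟩
        · exact h
        · rw [hj, hall j]
      rw [hp]
      linarith [(hvpos i).le]
    · exact le_rfl
  have hutil : 0 ≤ utility v 2 b i := le_trans hdevnn hdev
  have hu : utility v 2 b i = v i - price 2 b := by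
    unfold utility; rw [if_pos hwin]
  have : price 2 b ≤ v i := by linarith [hu ▸ hutil]
  have hvle : v i ≤ v ⟨0, by omega⟩ := hv.antitone (by exact Fin.mk_le_of_le_val (by omega))
  linarith
end

section
/- For the k-price auction with 3 ≤ k ≤ n, in any pure-strategy Nash equilibrium the price b_{(k)} satisfies b_{(k)} ≥ v_{n−(k−3)}; that is, the revenue cannot fall below the (n−k+3)-th highest valuation. -/
open Classical

lemma countP_ofFn {n : ℕ} (b : Fin n → ℝ) (p : ℝ → Bool) :
    (List.ofFn b).countP p = (Finset.univ.filter (fun j => p (b j))).card := by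
  rw [List.ofFn_eq_map, List.countP_map, List.countP_eq_length_filter]
  simp only [Finset.filter, Finset.card, Fin.univ_def, Multiset.filter_coe, Multiset.coe_card]
  congr 1
  apply List.filter_congr
  intro x _
  simp [Function.comp]

lemma kth_count {n : ℕ} (b : Fin n → ℝ) (k : ℕ) (hk1 : 1 ≤ k) (hkn : k ≤ n)
    (p : ℝ → Bool) (hp : ∀ x y : ℝ, x ≤ y → p x = true → p y = true) :
    p (kthHighest b k) = true ↔ k ≤ (Finset.univ.filter (fun j => p (b j))).card := by
  set s := (List.ofFn b).mergeSort (fun x y => decide (y ≤ x)) with hs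
  have hlen : s.length = n := by
    rw [hs, List.length_mergeSort, List.length_ofFn]
  have hperm : s.Perm (List.ofFn b) := List.mergeSort_perm _ _
  have hsorted : List.Pairwise (· ≥ ·) s := by
    have := List.pairwise_mergeSort (le := fun x y : ℝ => decide (y ≤ x))
      (fun a b c h₁ h₂ => by simp_all; linarith)
      (fun a b => by simpa using le_total b a) (List.ofFn b)
    rw [← hs] at this
    simpa using this
  have hget : ∀ {i j : ℕ} (hi : i < s.length) (hj : j < s.length), i ≤ j → s[j] ≤ s[i] := by
    intro i j hi hj hij
    rcases eq_or_lt_of_le hij with rfl | h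
    · exact le_refl _
    · exact (List.pairwise_iff_getElem.mp hsorted) i j hi hj h
  have hkk : k - 1 < s.length := by omega
  have hkth : kthHighest b k = s[k-1] := by
    rw [kthHighest, ← hs]
    exact List.getD_eq_getElem s 0 hkk
  have hcnt : s.countP p = (Finset.univ.filter (fun j => p (b j))).card := by
    rw [hperm.countP_eq, countP_ofFn]
  rw [← hcnt, hkth]
  constructor
  · intro hpk
    have hall : ∀ a ∈ s.take k, p a = true := by
      intro a ha
      obtain ⟨i, hi, hieq⟩ := List.mem_iff_getElem.mp ha
      rw [List.getElem_take] at hieq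
      have hilen : i < s.length := by
        rw [List.length_take] at hi; omega
      have : s[k-1] ≤ s[i] := by
        apply hget hilen hkk
        rw [List.length_take] at hi; omega
      subst hieq
      exact hp _ _ this hpk
    have h1 : (s.take k).countP p = k := by
      rw [List.countP_eq_length.mpr hall, List.length_take]
      omega
    have h2 : s.countP p = (s.take k).countP p + (s.drop k).countP p := by
      conv_lhs => rw [← List.take_append_drop k s]
      rw [List.countP_append]
    omega
  · intro hcard
    by_contra hpk
    have hdrop : (s.drop (k-1)).countP p = 0 := by
      apply List.countP_eq_zero.mpr
      intro a ha
      obtain ⟨j, hj, hjeq⟩ := List.mem_iff_getElem.mp ha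
      rw [List.getElem_drop] at hjeq
      have hjl : k - 1 + j < s.length := by
        rw [List.length_drop] at hj; omega
      have hle : s[k-1+j] ≤ s[k-1] := hget hkk hjl (by omega)
      subst hjeq
      intro hpa
      exact hpk (hp _ _ hle hpa)
    have h2 : s.countP p = (s.take (k-1)).countP p + (s.drop (k-1)).countP p := by
      conv_lhs => rw [← List.take_append_drop (k-1) s]
      rw [List.countP_append]
    have h3 : (s.take (k-1)).countP p ≤ k - 1 := by
      have := List.countP_le_length (p := p) (l := s.take (k-1))
      rw [List.length_take] at this
      omega
    omega


lemma count_lt_kth {n : ℕ} (c : Fin n → ℝ) (k : ℕ) (hk1 : 1 ≤ k) (hkn : k ≤ n) (x : ℝ) :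
    x < kthHighest c k ↔ k ≤ (Finset.univ.filter (fun j => x < c j)).card := by
  have hiff := kth_count c k hk1 hkn (fun y => decide (x < y))
    (fun a b hab ha => by simp only [decide_eq_true_eq] at *; linarith)
  simpa using hiff

lemma count_le_kth {n : ℕ} (c : Fin n → ℝ) (k : ℕ) (hk1 : 1 ≤ k) (hkn : k ≤ n) (x : ℝ) :
    x ≤ kthHighest c k ↔ k ≤ (Finset.univ.filter (fun j => x ≤ c j)).card := by
  have hiff := kth_count c k hk1 hkn (fun y => decide (x ≤ y))
    (fun a b hab ha => by simp only [decide_eq_true_eq] at *; linarith)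
  simpa using hiff

lemma deviate {n : ℕ} (v : Fin n → ℝ) (k : ℕ) (hk3 : 3 ≤ k) (hkn : k ≤ n)
    (b : Fin n → ℝ) (hpos : ∀ i, 0 ≤ b i)
    (hnash : ∀ i : Fin n, ∀ b' : ℝ, 0 ≤ b' →
      utility v k (Function.update b i b') i ≤ utility v k b i)
    (i : Fin n) (hloss : ¬ wins b i) (hvi : kthHighest b k < v i)
    (hcount : (Finset.univ.filter
      (fun j => j ≠ i ∧ kthHighest b k < b j)).card ≤ k - 2) :
    False := by
  set P := kthHighest b k with hP
  set M := Finset.univ.sup' ⟨i, Finset.mem_univ i⟩ b with hM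
  have hMb : ∀ j, b j ≤ M := fun j => Finset.le_sup' b (Finset.mem_univ j)
  have hB0 : (0:ℝ) ≤ M + 1 := by have := hpos i; have := hMb i; linarith
  set b' := Function.update b i (M + 1) with hb'
  have hb'i : b' i = M + 1 := Function.update_self i _ b
  have hb'j : ∀ j, j ≠ i → b' j = b j := fun j hj => Function.update_of_ne hj _ b
  have hwin : wins b' i := by
    constructor
    · intro j
      by_cases hji : j = i
      · subst hji; exact le_refl _
      · rw [hb'j j hji, hb'i]
        have := hMb j; linarith
    · intro j hj
      by_cases hji : j = i
      · subst hji; exact le_refl _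
      · exfalso
        rw [hb'j j hji, hb'i] at hj
        have := hMb j; linarith
  have hcard' : (Finset.univ.filter (fun j => P < b' j)).card ≤ k - 1 := by
    have hsub : (Finset.univ.filter (fun j => P < b' j)) ⊆
        insert i (Finset.univ.filter (fun j => j ≠ i ∧ P < b j)) := by
      intro j hj
      simp only [Finset.mem_filter, Finset.mem_univ, true_and] at hj
      by_cases hji : j = i
      · subst hji; exact Finset.mem_insert_self _ _
      · apply Finset.mem_insert_of_mem
        rw [hb'j j hji] at hj
        simp only [Finset.mem_filter, Finset.mem_univ, true_and]
        exact ⟨hji, hj⟩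
    have := Finset.card_le_card hsub
    have := Finset.card_insert_le i (Finset.univ.filter (fun j => j ≠ i ∧ P < b j))
    omega
  have hkle : kthHighest b' k ≤ P := by
    by_contra h
    push_neg at h
    have := (count_lt_kth b' k (by omega) hkn P).mp h
    omega
  have hprice : price k b' = kthHighest b' k := by
    rw [price, if_neg (by omega)]
  have hut : utility v k b' i = v i - price k b' := if_pos hwin
  have hut0 : utility v k b i = 0 := if_neg hloss
  have := hnash i (M + 1) hB0
  rw [← hb', hut, hut0, hprice] at this
  linarith

theorem stmt2 {n : ℕ} (hn : 2 ≤ n) (v : Fin n → ℝ) (hv : StrictAnti v) (hvpos : ∀ i, 0 < v i) (k : ℕ) (hk3 : 3 ≤ k) (hkn : k ≤ n)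
    (b : Fin n → ℝ) (hb : NashEq v k b) :
    vIdx v (n + 3 - k) ≤ kthHighest b k := by
  obtain ⟨hpos, hnash⟩ := hb
  by_contra hcon
  push_neg at hcon
  set P := kthHighest b k with hP
  have hvIdx : vIdx v (n + 3 - k) = v ⟨n + 2 - k, by omega⟩ := by
    rw [vIdx, dif_pos ⟨by omega, by omega⟩]
    congr 1
    exact Fin.ext (by simp; omega)
  rw [hvIdx] at hcon
  -- at most k-1 bids strictly above P
  have hG : (Finset.univ.filter (fun j => P < b j)).card ≤ k - 1 := by
    by_contra h
    push_neg at h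
    have := (count_lt_kth b k (by omega) hkn P).mpr (by omega)
    exact lt_irrefl P this
  -- at least k bids ≥ P
  have hGE : k ≤ (Finset.univ.filter (fun j => P ≤ b j)).card := by
    exact (count_le_kth b k (by omega) hkn P).mp (le_refl P)
  -- at least n+3-k agents have valuation above P
  have hHigh : n + 3 - k ≤ (Finset.univ.filter (fun j => P < v j)).card := by
    have := Finset.card_le_card_of_injOn
      (f := fun i : Fin (n + 3 - k) => (⟨i.val, by omega⟩ : Fin n))
      (s := Finset.univ) (t := Finset.univ.filter (fun j => P < v j))
      (by
        intro a _
        simp only [Finset.coe_filter, Finset.mem_univ, true_and, Set.mem_setOf_eq]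
        have hle : v (⟨n + 2 - k, by omega⟩ : Fin n) ≤ v ⟨a.val, by omega⟩ := by
          apply hv.antitone
          simp only [Fin.mk_le_mk]
          omega
        linarith)
      (by
        intro a _ c _ h
        exact Fin.ext (by simpa using h))
    simpa using this
  have huniqwin : ∀ x y : Fin n, wins b x → wins b y → x = y := by
    intro x y hx hy
    have h1 := hx.2 y (le_antisymm (hx.1 y) (hy.1 x))
    have h2 := hy.2 x (le_antisymm (hy.1 x) (hx.1 y))
    exact le_antisymm h1 h2
  -- find a suitable losing agent
  have key : ∃ i : Fin n, ¬ wins b i ∧ P < v i ∧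
      (Finset.univ.filter (fun j => j ≠ i ∧ P < b j)).card ≤ k - 2 := by
    by_cases hcase : (Finset.univ.filter (fun j => P < b j)).card ≤ k - 2
    · -- case A: pick from GE ∩ High
      have hScard : 2 ≤ ((Finset.univ.filter (fun j => P ≤ b j)) ∩
          (Finset.univ.filter (fun j => P < v j))).card := by
        have hun : ((Finset.univ.filter (fun j => P ≤ b j)) ∪
            (Finset.univ.filter (fun j => P < v j))).card ≤ n := by
          have := Finset.card_le_univ ((Finset.univ.filter (fun j => P ≤ b j)) ∪
            (Finset.univ.filter (fun j => P < v j)))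
          simpa using this
        have := Finset.card_inter_add_card_union
          (Finset.univ.filter (fun j => P ≤ b j))
          (Finset.univ.filter (fun j => P < v j))
        omega
      have h1 : 1 < ((Finset.univ.filter (fun j => P ≤ b j)) ∩
          (Finset.univ.filter (fun j => P < v j))).card := by omega
      obtain ⟨a, ha, c, hc, hac⟩ := Finset.one_lt_card.mp h1
      have hprops : ∀ x ∈ ((Finset.univ.filter (fun j => P ≤ b j)) ∩
          (Finset.univ.filter (fun j => P < v j))), P ≤ b x ∧ P < v x := by
        intro x hx
        simp only [Finset.mem_inter, Finset.mem_filter, Finset.mem_univ, true_and] at hx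
        exact ⟨hx.1, hx.2⟩
      have hcnt : ∀ x : Fin n, (Finset.univ.filter (fun j => j ≠ x ∧ P < b j)).card ≤ k - 2 := by
        intro x
        have hsub : (Finset.univ.filter (fun j => j ≠ x ∧ P < b j)) ⊆
            (Finset.univ.filter (fun j => P < b j)) := by
          intro j hj
          simp only [Finset.mem_filter, Finset.mem_univ, true_and] at *
          exact hj.2
        have := Finset.card_le_card hsub
        omega
      by_cases hwa : wins b a
      · refine ⟨c, ?_, (hprops c hc).2, hcnt c⟩
        intro hwc
        exact hac (huniqwin a c hwa hwc)
      · exact ⟨a, hwa, (hprops a ha).2, hcnt a⟩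
    · -- case B: G.card = k - 1, pick from G ∩ High
      push_neg at hcase
      have hGcard : (Finset.univ.filter (fun j => P < b j)).card = k - 1 := by
        omega
      set G := Finset.univ.filter (fun j => P < b j) with hGdef
      set H := Finset.univ.filter (fun j => P < v j) with hHdef
      have hdiff : (G \ H).card ≤ k - 3 := by
        have hsub : G \ H ⊆ Finset.univ \ H := by
          intro x hx
          rw [Finset.mem_sdiff] at *
          exact ⟨Finset.mem_univ x, hx.2⟩
        have h1 := Finset.card_le_card hsub
        have h2 : (Finset.univ \ H).card = n - H.card := by
          rw [Finset.card_sdiff_of_subset (Finset.subset_univ H)]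
          simp
        omega
      have hint : 2 ≤ (G ∩ H).card := by
        have := Finset.card_sdiff_add_card_inter G H
        omega
      have h1 : 1 < (G ∩ H).card := by omega
      obtain ⟨a, ha, c, hc, hac⟩ := Finset.one_lt_card.mp h1
      have hprops : ∀ x ∈ G ∩ H, P < b x ∧ P < v x := by
        intro x hx
        simp only [hGdef, hHdef, Finset.mem_inter, Finset.mem_filter, Finset.mem_univ,
          true_and] at hx
        exact hx
      have hcnt : ∀ x ∈ G ∩ H,
          (Finset.univ.filter (fun j => j ≠ x ∧ P < b j)).card ≤ k - 2 := by
        intro x hx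
        have hsub : (Finset.univ.filter (fun j => j ≠ x ∧ P < b j)) ⊆ G.erase x := by
          intro j hj
          simp only [Finset.mem_filter, Finset.mem_univ, true_and] at hj
          rw [Finset.mem_erase]
          refine ⟨hj.1, ?_⟩
          simp only [hGdef, Finset.mem_filter, Finset.mem_univ, true_and]
          exact hj.2
        have h1 := Finset.card_le_card hsub
        have h2 : (G.erase x).card = G.card - 1 := by
          rw [Finset.card_erase_of_mem (Finset.mem_inter.mp hx).1]
        omega
      by_cases hwa : wins b a
      · refine ⟨c, ?_, (hprops c hc).2, hcnt c hc⟩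
        intro hwc
        exact hac (huniqwin a c hwa hwc)
      · exact ⟨a, hwa, (hprops a ha).2, hcnt a ha⟩
  obtain ⟨i, hloss, hvi, hcnt⟩ := key
  exact deviate v k hk3 hkn b hpos hnash i hloss hvi hcnt
end
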